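/- Suppose u₀ = 0, v₀ ≠ 0, and α(γ₀ − α/β²) ≥ −‖v₀‖²/8. Then the projection of (0, v₀, γ₀) onto C̃_α equals {(u, v₀/2, γ₀ − α/β²) : u ∈ X, ‖u‖ = √(2α(γ₀ − α/β²) + ‖v₀‖²/4)}; this set is a singleton if and only if α(γ₀ − α/β²) = −‖v₀‖²/8. -/

import Mathlib

variable {X : Type*} [NormedAddCommGroup X] [InnerProductSpace ℝ X]

/-- Squared β-weighted distance on `X × X × ℝ`. -/
noncomputable def d2 (β : ℝ) (p q : X × X × ℝ) : ℝ :=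
  ‖p.1 - q.1‖^2 + ‖p.2.1 - q.2.1‖^2 + β^2 * (p.2.2 - q.2.2)^2

/-- The set of nearest points of `S` to `z` in the β-weighted norm. -/
noncomputable def projSet (β : ℝ) (S : Set (X × X × ℝ)) (z : X × X × ℝ) :
    Set (X × X × ℝ) :=
  {p | p ∈ S ∧ ∀ q ∈ S, d2 β p z ≤ d2 β q z}

/-- The set `C̃_α`. -/
def Ctilde (α : ℝ) : Set (X × X × ℝ) := {p | ‖p.1‖^2 - ‖p.2.1‖^2 = 2 * α * p.2.2}

/-- The set `C_α`. -/
def Cα (α : ℝ) : Set (X × X × ℝ) := {p | (inner ℝ p.1 p.2.1 : ℝ) = α * p.2.2}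

lemma d2_decomp (α β γ₀ : ℝ) (hβ : β ≠ 0) (v₀ : X) (q : X × X × ℝ)
    (hq : q ∈ Ctilde α) :
    d2 β q ((0 : X), v₀, γ₀) =
      2 * ‖q.2.1 - (2:ℝ)⁻¹ • v₀‖^2 + β^2 * (q.2.2 - (γ₀ - α / β^2))^2
        + (‖v₀‖^2 / 2 + 2 * α * γ₀ - α^2 / β^2) := by
  obtain ⟨u, v, γ⟩ := q
  simp only [Ctilde, Set.mem_setOf_eq] at hq
  simp only [d2]
  have h1 : ‖v - v₀‖^2 = ‖v‖^2 - 2 * (inner ℝ v v₀ : ℝ) + ‖v₀‖^2 := norm_sub_sq_real v v₀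
  have h2 : ‖v - (2:ℝ)⁻¹ • v₀‖^2 = ‖v‖^2 - (inner ℝ v v₀ : ℝ) + ‖v₀‖^2 / 4 := by
    rw [norm_sub_sq_real, real_inner_smul_right, norm_smul, Real.norm_eq_abs]
    rw [show |(2:ℝ)⁻¹| = 2⁻¹ by norm_num]
    ring
  have hu : ‖u - (0:X)‖^2 = ‖v‖^2 + 2 * α * γ := by
    rw [sub_zero]; linarith
  rw [hu, h1, h2]
  field_simp
  ring

theorem stmt11 (α β γ₀ : ℝ) (hα : α ≠ 0) (hβ : 0 < β) (v₀ : X) (hv : v₀ ≠ 0)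
    (hcase : α * (γ₀ - α / β^2) ≥ -‖v₀‖^2 / 8) :
    projSet β (Ctilde α) ((0 : X), v₀, γ₀) =
      {p : X × X × ℝ | ∃ u : X,
        ‖u‖ = Real.sqrt (2 * α * (γ₀ - α / β^2) + ‖v₀‖^2 / 4) ∧
        p = (u, (2 : ℝ)⁻¹ • v₀, γ₀ - α / β^2)} ∧
    ((∃ p, projSet β (Ctilde α) ((0 : X), v₀, γ₀) = {p}) ↔
      α * (γ₀ - α / β^2) = -‖v₀‖^2 / 8) := by
  have hβ' : β ≠ 0 := ne_of_gt hβ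
  have hR2nonneg : 0 ≤ 2 * α * (γ₀ - α / β^2) + ‖v₀‖^2 / 4 := by linarith
  have hsq : Real.sqrt (2 * α * (γ₀ - α / β^2) + ‖v₀‖^2 / 4) ^ 2
      = 2 * α * (γ₀ - α / β^2) + ‖v₀‖^2 / 4 := Real.sq_sqrt hR2nonneg
  have hnv : (0:ℝ) < ‖v₀‖ := norm_pos_iff.mpr hv
  have hhalf : ‖(2:ℝ)⁻¹ • v₀‖^2 = ‖v₀‖^2 / 4 := by
    rw [norm_smul, Real.norm_eq_abs, show |(2:ℝ)⁻¹| = 2⁻¹ by norm_num]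
    ring
  have hcand : ∀ u : X, ‖u‖ = Real.sqrt (2 * α * (γ₀ - α / β^2) + ‖v₀‖^2 / 4) →
      ((u, (2:ℝ)⁻¹ • v₀, γ₀ - α / β^2) : X × X × ℝ) ∈ Ctilde α := by
    intro u hu
    simp only [Ctilde, Set.mem_setOf_eq]
    rw [hu, hsq, hhalf]
    ring
  have hdcand : ∀ u : X, ‖u‖ = Real.sqrt (2 * α * (γ₀ - α / β^2) + ‖v₀‖^2 / 4) →
      d2 β ((u, (2:ℝ)⁻¹ • v₀, γ₀ - α / β^2) : X × X × ℝ) ((0:X), v₀, γ₀) =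
        ‖v₀‖^2 / 2 + 2 * α * γ₀ - α^2 / β^2 := by
    intro u hu
    rw [d2_decomp α β γ₀ hβ' v₀ _ (hcand u hu)]
    simp
  have hmin : ∀ u : X, ‖u‖ = Real.sqrt (2 * α * (γ₀ - α / β^2) + ‖v₀‖^2 / 4) →
      ((u, (2:ℝ)⁻¹ • v₀, γ₀ - α / β^2) : X × X × ℝ)
        ∈ projSet β (Ctilde α) ((0:X), v₀, γ₀) := by
    intro u hu
    refine ⟨hcand u hu, fun q hq => ?_⟩
    rw [hdcand u hu, d2_decomp α β γ₀ hβ' v₀ q hq]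
    have h1 : 0 ≤ ‖q.2.1 - (2:ℝ)⁻¹ • v₀‖^2 := by positivity
    have h2 : 0 ≤ β^2 * (q.2.2 - (γ₀ - α / β^2))^2 := by positivity
    linarith
  have hexu : ‖((Real.sqrt (2 * α * (γ₀ - α / β^2) + ‖v₀‖^2 / 4) / ‖v₀‖) • v₀ : X)‖
      = Real.sqrt (2 * α * (γ₀ - α / β^2) + ‖v₀‖^2 / 4) := by
    rw [norm_smul, Real.norm_eq_abs, abs_of_nonneg (by positivity)]
    field_simp
  have hset : projSet β (Ctilde α) ((0:X), v₀, γ₀) =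
      {p : X × X × ℝ | ∃ u : X,
        ‖u‖ = Real.sqrt (2 * α * (γ₀ - α / β^2) + ‖v₀‖^2 / 4) ∧
        p = (u, (2:ℝ)⁻¹ • v₀, γ₀ - α / β^2)} := by
    apply Set.Subset.antisymm
    · rintro ⟨pu, pv, pγ⟩ ⟨hpC, hpmin⟩
      have hle := hpmin _ (hcand _ hexu)
      rw [hdcand _ hexu, d2_decomp α β γ₀ hβ' v₀ _ hpC] at hle
      simp only at hle
      have h1 : 0 ≤ ‖pv - (2:ℝ)⁻¹ • v₀‖^2 := by positivity
      have h2 : 0 ≤ β^2 * (pγ - (γ₀ - α / β^2))^2 := by positivity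
      have hv0 : ‖pv - (2:ℝ)⁻¹ • v₀‖^2 = 0 := by nlinarith
      have hγ0 : (pγ - (γ₀ - α / β^2))^2 = 0 := by
        have hβ2 : (0:ℝ) < β^2 := by positivity
        nlinarith
      have hpv : pv = (2:ℝ)⁻¹ • v₀ := by
        have := pow_eq_zero_iff (n := 2) (by norm_num) |>.mp hv0
        rwa [norm_eq_zero, sub_eq_zero] at this
      have hpγ : pγ = γ₀ - α / β^2 := by
        have := pow_eq_zero_iff (n := 2) (by norm_num) |>.mp hγ0
        linarith [sub_eq_zero.mp this]
      refine ⟨pu, ?_, by rw [hpv, hpγ]⟩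
      simp only [Ctilde, Set.mem_setOf_eq] at hpC
      rw [hpv, hpγ, hhalf] at hpC
      have hpu : ‖pu‖^2 = 2 * α * (γ₀ - α / β^2) + ‖v₀‖^2 / 4 := by linarith
      rw [← hpu, Real.sqrt_sq (norm_nonneg _)]
    · rintro p ⟨u, hu, rfl⟩
      exact hmin u hu
  refine ⟨hset, ?_⟩
  constructor
  · rintro ⟨p, hp⟩
    by_contra hne
    have hgt : -‖v₀‖^2 / 8 < α * (γ₀ - α / β^2) := lt_of_le_of_ne hcase (Ne.symm hne)
    have hR2pos : 0 < 2 * α * (γ₀ - α / β^2) + ‖v₀‖^2 / 4 := by nlinarith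
    have hsqrtpos : 0 < Real.sqrt (2 * α * (γ₀ - α / β^2) + ‖v₀‖^2 / 4) :=
      Real.sqrt_pos.mpr hR2pos
    have hu₁ne : ((Real.sqrt (2 * α * (γ₀ - α / β^2) + ‖v₀‖^2 / 4) / ‖v₀‖) • v₀ : X) ≠ 0 := by
      intro h
      rw [h, norm_zero] at hexu
      linarith
    have hmem1 : (((Real.sqrt (2 * α * (γ₀ - α / β^2) + ‖v₀‖^2 / 4) / ‖v₀‖) • v₀,
        (2:ℝ)⁻¹ • v₀, γ₀ - α / β^2) : X × X × ℝ) ∈ ({p} : Set (X × X × ℝ)) := by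
      rw [← hp, hset]
      exact ⟨_, hexu, rfl⟩
    have hmem2 : ((-((Real.sqrt (2 * α * (γ₀ - α / β^2) + ‖v₀‖^2 / 4) / ‖v₀‖) • v₀),
        (2:ℝ)⁻¹ • v₀, γ₀ - α / β^2) : X × X × ℝ) ∈ ({p} : Set (X × X × ℝ)) := by
      rw [← hp, hset]
      exact ⟨_, by rw [norm_neg]; exact hexu, rfl⟩
    simp only [Set.mem_singleton_iff] at hmem1 hmem2
    have heq2 := hmem1.trans hmem2.symm
    have heq3 := ((Prod.mk.injEq _ _ _ _).mp heq2).1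
    apply hu₁ne
    have := eq_neg_iff_add_eq_zero.mp heq3
    have h2 : (2:ℝ) • ((Real.sqrt (2 * α * (γ₀ - α / β^2) + ‖v₀‖^2 / 4) / ‖v₀‖) • v₀ : X) = 0 := by
      rw [two_smul]; exact this
    simpa using (smul_eq_zero.mp h2).resolve_left (by norm_num)
  · intro heq
    have hR20 : 2 * α * (γ₀ - α / β^2) + ‖v₀‖^2 / 4 = 0 := by linarith
    refine ⟨((0:X), (2:ℝ)⁻¹ • v₀, γ₀ - α / β^2), ?_⟩
    rw [hset]
    ext p
    simp only [Set.mem_setOf_eq, Set.mem_singleton_iff]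
    constructor
    · rintro ⟨u, hu, rfl⟩
      rw [hR20, Real.sqrt_zero] at hu
      rw [norm_eq_zero.mp hu]
    · rintro rfl
      exact ⟨0, by rw [norm_zero, hR20, Real.sqrt_zero], rfl⟩
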